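/- Let S = C[x_0,...,x_n] and let M be a finitely generated graded S-module that is Cohen-Macaulay. Then the maximal degree sequence t_i(M) = max{j : β_{i,j}(M) ≠ 0} is strictly increasing in i, for i ranging over indices where the minimal free resolution is nonzero. -/

import Mathlib

open MvPolynomial DirectSum

noncomputable section

/-- The standard graded polynomial ring `ℂ[x_1,…,x_m]`. -/
abbrev PolyS (m : ℕ) : Type := MvPolynomial (Fin m) ℂ

/-- The degree-`e` homogeneous piece of the polynomial ring (zero for `e < 0`). -/
def hpiece (m : ℕ) (e : ℤ) : Submodule ℂ (PolyS m) :=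
  if 0 ≤ e then homogeneousSubmodule (Fin m) ℂ e.toNat else ⊥

/-- The graded free module `⊕_j S(-j)^{b j}`. -/
abbrev FreeMod (m : ℕ) (b : ℤ → ℕ) : Type :=
  DirectSum ℤ (fun j : ℤ => Fin (b j) → PolyS m)

/-- The degree-`deg` homogeneous piece of the graded free module `⊕_j S(-j)^{b j}`. -/
def freePiece (m : ℕ) (b : ℤ → ℕ) (deg : ℤ) : Submodule ℂ (FreeMod m b) where
  carrier := {x | ∀ (j : ℤ) (i : Fin (b j)), x j i ∈ hpiece m (deg - j)}
  add_mem' := by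
    intro x y hx hy j i
    simp only [DirectSum.add_apply, Pi.add_apply]
    exact add_mem (hx j i) (hy j i)
  zero_mem' := by
    intro j i
    simp only [DirectSum.zero_apply, Pi.zero_apply]
    exact zero_mem _
  smul_mem' := by
    intro c x hx j i
    simp only [DirectSum.smul_apply, Pi.smul_apply]
    exact Submodule.smul_mem _ c (hx j i)

/-- The irrelevant maximal ideal `(x_1,…,x_m)`. -/
def mIdeal (m : ℕ) : Ideal (PolyS m) := Ideal.span (Set.range (X : Fin m → PolyS m))

/-- A (ℤ-)grading on an `S`-module, compatible with the standard grading of `S`. -/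
structure GradedSMod (m : ℕ) (M : Type) [AddCommGroup M] [Module ℂ M]
    [Module (PolyS m) M] [IsScalarTower ℂ (PolyS m) M] where
  piece : ℤ → Submodule ℂ M
  internal : DirectSum.IsInternal piece
  smul_mem : ∀ (d : ℕ) (p : PolyS m), p ∈ homogeneousSubmodule (Fin m) ℂ d →
    ∀ (j : ℤ) (x : M), x ∈ piece j → p • x ∈ piece (d + j)

/-- A minimal graded free resolution of a graded module `M`, recorded together with
its graded Betti numbers `b i j`. -/
structure MinFreeRes (m : ℕ) (M : Type) [AddCommGroup M] [Module ℂ M]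
    [Module (PolyS m) M] [IsScalarTower ℂ (PolyS m) M] (gM : GradedSMod m M) where
  b : ℕ → ℤ → ℕ
  bfin : ∀ i, (Function.support (b i)).Finite
  diff : ∀ i : ℕ, FreeMod m (b (i + 1)) →ₗ[PolyS m] FreeMod m (b i)
  aug : FreeMod m (b 0) →ₗ[PolyS m] M
  aug_surjective : Function.Surjective aug
  exact_aug : LinearMap.ker aug = LinearMap.range (diff 0)
  exact : ∀ i, LinearMap.ker (diff i) = LinearMap.range (diff (i + 1))
  graded_diff : ∀ (i : ℕ) (deg : ℤ) (x : FreeMod m (b (i + 1))),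
    x ∈ freePiece m (b (i + 1)) deg → diff i x ∈ freePiece m (b i) deg
  graded_aug : ∀ (deg : ℤ) (x : FreeMod m (b 0)),
    x ∈ freePiece m (b 0) deg → aug x ∈ gM.piece deg
  minimal : ∀ (i : ℕ) (x : FreeMod m (b (i + 1))),
    diff i x ∈ (mIdeal m) • (⊤ : Submodule (PolyS m) (FreeMod m (b i)))

/-- `tmax c` : the largest degree `j` with `c j ≠ 0` (the `i`-th entry of the maximal
degree sequence, when `c = b i`). -/
def tmax (c : ℤ → ℕ) : ℤ := sSup {j | c j ≠ 0}

/-- The Castelnuovo–Mumford regularity read off from a Betti table. -/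
def regOf (b : ℕ → ℤ → ℕ) : ℤ := sSup {z | ∃ i j, b i j ≠ 0 ∧ z = j - (i : ℤ)}


/-- The grading on (the underlying module of) a homogeneous ideal `J` induced from the
standard grading of the polynomial ring. -/
def NatIdealGrading (m : ℕ) (J : Ideal (PolyS m)) (g : GradedSMod m ↥J) : Prop :=
  ∀ (j : ℤ) (x : ↥J), x ∈ g.piece j ↔ (x : PolyS m) ∈ hpiece m j

/-- The ideal `I = (y_1,…,y_N)` inside `S = ℂ[x_0,…,x_n,y_1,…,y_N]`, where the last `N`
variables are the `y`'s. -/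
def yIdeal (n N : ℕ) : Ideal (PolyS (n + 1 + N)) :=
  Ideal.span {p | ∃ i : Fin (n + 1 + N), n + 1 ≤ (i : ℕ) ∧ p = X i}

/-- Cohen–Macaulayness of a module with minimal free resolution `F` of length `r`,
expressed through the standard characterization: `Ext^i(M, S) = 0` for `i < r = pd M`,
i.e. the dual of the minimal free resolution is exact except at the last spot. -/
def IsCMres (m : ℕ) {M : Type} [AddCommGroup M] [Module ℂ M]
    [Module (PolyS m) M] [IsScalarTower ℂ (PolyS m) M] {gM : GradedSMod m M}
    (F : MinFreeRes m M gM) (r : ℕ) : Prop :=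
  (0 < r → LinearMap.ker (F.diff 0).dualMap = ⊥) ∧
  ∀ i, i + 1 < r →
    LinearMap.ker ((F.diff (i + 1)).dualMap) = LinearMap.range ((F.diff i).dualMap)

/-- A bundled graded module over `ℂ[x_1,…,x_m]`. -/
structure GradedModuleBundle (m : ℕ) where
  carrier : Type
  [isAddCommGroup : AddCommGroup carrier]
  [isModC : Module ℂ carrier]
  [isModS : Module (PolyS m) carrier]
  [isTower : IsScalarTower ℂ (PolyS m) carrier]
  grading : GradedSMod m carrier

attribute [instance] GradedModuleBundle.isAddCommGroup GradedModuleBundle.isModC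
  GradedModuleBundle.isModS GradedModuleBundle.isTower


namespace Stmt0Aux

variable {m : ℕ}

lemma constantCoeff_eq_zero_of_mem_mIdeal {p : PolyS m} (hp : p ∈ mIdeal m) :
    constantCoeff p = 0 := by
  have h : mIdeal m ≤ RingHom.ker (constantCoeff (R := ℂ) (σ := Fin m)) := by
    rw [mIdeal, Ideal.span_le]
    rintro _ ⟨i, rfl⟩
    simp [RingHom.mem_ker]
  exact h hp

lemma one_not_mem_mIdeal : (1 : PolyS m) ∉ mIdeal m := fun h => by
  simpa using constantCoeff_eq_zero_of_mem_mIdeal h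

lemma map_mem_mIdeal {N : Type*} [AddCommGroup N] [Module (PolyS m) N]
    (φ : N →ₗ[PolyS m] PolyS m) {y : N}
    (hy : y ∈ mIdeal m • (⊤ : Submodule (PolyS m) N)) : φ y ∈ mIdeal m := by
  refine Submodule.smul_induction_on hy (fun r hr x _ => ?_) (fun x y hx hy => ?_)
  · rw [map_smul, smul_eq_mul]
    exact Ideal.mul_mem_right _ _ hr
  · rw [map_add]
    exact Ideal.add_mem _ hx hy

/-- The coordinate functional at the `(j,k)` basis element. -/
def coord (b : ℤ → ℕ) (j : ℤ) (k : Fin (b j)) : FreeMod m b →ₗ[PolyS m] PolyS m where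
  toFun x := x j k
  map_add' x y := by simp [DirectSum.add_apply]
  map_smul' c x := by simp [DirectSum.smul_apply]

/-- The `(j,k)` basis element of the free module. -/
def bas (b : ℤ → ℕ) (j : ℤ) (k : Fin (b j)) : FreeMod m b :=
  DirectSum.lof (PolyS m) ℤ (fun j => Fin (b j) → PolyS m) j (Pi.single k 1)

lemma coord_bas_same (b : ℤ → ℕ) (j : ℤ) (k : Fin (b j)) :
    coord (m := m) b j k (bas b j k) = 1 := by
  simp only [coord, bas, LinearMap.coe_mk, AddHom.coe_mk, DirectSum.lof_apply]
  show (DirectSum.lof (PolyS m) ℤ (fun j => Fin (b j) → PolyS m) j (Pi.single k 1)) j k = 1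
  rw [DirectSum.lof_apply]
  simp

lemma bas_mem_freePiece (b : ℤ → ℕ) (j : ℤ) (k : Fin (b j)) :
    bas (m := m) b j k ∈ freePiece m b j := by
  intro j' i
  by_cases h : j' = j
  · subst h
    rw [bas, DirectSum.lof_apply]
    rcases eq_or_ne i k with rfl | hik
    · rw [Pi.single_eq_same, hpiece, if_pos (by omega)]
      rw [sub_self, Int.toNat_zero, mem_homogeneousSubmodule]
      exact isHomogeneous_one (Fin m) ℂ
    · rw [Pi.single_eq_of_ne hik]
      exact zero_mem _
  · rw [bas, DirectSum.lof_eq_of, DirectSum.of_eq_of_ne _ _ _ h]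
    exact zero_mem _

lemma exists_bas_ne_zero {b : ℤ → ℕ} (θ : FreeMod m b →ₗ[PolyS m] PolyS m)
    (h : θ ≠ 0) : ∃ (j : ℤ) (k : Fin (b j)), θ (bas b j k) ≠ 0 := by
  by_contra hc
  push_neg at hc
  apply h
  apply LinearMap.ext
  intro x
  rw [LinearMap.zero_apply]
  induction x using DirectSum.induction_on with
  | zero => simp
  | of j v =>
    have hv : (DirectSum.of (fun j : ℤ => Fin (b j) → PolyS m) j v)
        = ∑ k : Fin (b j), v k • bas b j k := by
      rw [← DirectSum.lof_eq_of (PolyS m)]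
      have hvs : v = ∑ k : Fin (b j),
          v k • (Pi.single k (1 : PolyS m) : Fin (b j) → PolyS m) := by
        funext a
        rw [Finset.sum_apply]
        simp [Pi.single_apply]
      conv_lhs => rw [hvs]
      rw [map_sum]
      simp only [map_smul, DirectSum.lof_eq_of]
      rfl
    rw [hv, map_sum]
    simp [hc]
  | add x y hx hy => simp [map_add, hx, hy]

lemma eq_zero_of_deg0 {p : PolyS m} (hp : p ∈ homogeneousSubmodule (Fin m) ℂ 0)
    (h0 : constantCoeff p = 0) : p = 0 := by
  rw [mem_homogeneousSubmodule] at hp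
  ext d
  rcases eq_or_ne d 0 with rfl | hd
  · simpa [constantCoeff_eq] using h0
  · rw [coeff_zero]
    exact hp.coeff_eq_zero (fun hdeg => hd ((Finsupp.degree_eq_zero_iff d).mp hdeg))

lemma le_tmax {c : ℤ → ℕ} (hfin : (Function.support c).Finite) {j : ℤ} (hj : c j ≠ 0) :
    j ≤ tmax c :=
  le_csSup hfin.bddAbove hj

lemma tmax_mem {c : ℤ → ℕ} (hfin : (Function.support c).Finite) (hne : c ≠ 0) :
    c (tmax c) ≠ 0 :=
  Set.Nonempty.csSup_mem (Function.support_nonempty_iff.mpr hne) hfin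

end Stmt0Aux

open Stmt0Aux in
/-- Over `S = ℂ[x_0,…,x_n]`, if a finitely generated graded module `M`
is Cohen–Macaulay then its maximal degree sequence `t_i(M) = max{j : β_{i,j}(M) ≠ 0}` is
strictly increasing on the indices where the minimal free resolution is nonzero. -/
theorem stmt0 (n : ℕ) (M : Type) [AddCommGroup M] [Module ℂ M]
    [Module (PolyS (n + 1)) M] [IsScalarTower ℂ (PolyS (n + 1)) M]
    (gM : GradedSMod (n + 1) M) (F : MinFreeRes (n + 1) M gM) (r : ℕ)
    (hlen : ∀ i, r < i → F.b i = 0)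
    (hCM : IsCMres (n + 1) F r) :
    ∀ i, F.b (i + 1) ≠ 0 → tmax (F.b i) < tmax (F.b (i + 1)) := by
  intro i hne
  have hir : i < r := by
    by_contra h
    exact hne (hlen (i + 1) (by omega))
  obtain ⟨j0, hj0⟩ : ∃ j0, F.b (i + 1) j0 ≠ 0 := Function.ne_iff.mp hne
  by_cases hbi : F.b i = 0
  · -- degenerate case: F_i = 0, contradiction with minimality + exactness
    exfalso
    have hd0 : ∀ x, F.diff i x = 0 := by
      intro x
      refine DFinsupp.ext fun j => ?_
      have : F.b i j = 0 := by rw [hbi]; rfl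
      exact funext fun k => absurd k.isLt (by omega)
    have hker : LinearMap.ker (F.diff i) = ⊤ := by
      ext x; simp [LinearMap.mem_ker, hd0]
    have hrange : LinearMap.range (F.diff (i + 1)) = ⊤ := by
      rw [← F.exact i, hker]
    set l : Fin (F.b (i + 1) j0) := ⟨0, Nat.pos_of_ne_zero hj0⟩
    obtain ⟨y, hy⟩ : ∃ y, F.diff (i + 1) y = bas (F.b (i + 1)) j0 l := by
      have : bas (F.b (i + 1)) j0 l ∈ LinearMap.range (F.diff (i + 1)) := by
        rw [hrange]; trivial
      exact this
    have hmem : (1 : PolyS (n + 1)) ∈ mIdeal (n + 1) := by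
      have := map_mem_mIdeal (coord (F.b (i + 1)) j0 l) (hy ▸ F.minimal (i + 1) y)
      rwa [coord_bas_same] at this
    exact one_not_mem_mIdeal hmem
  · set t : ℤ := tmax (F.b i) with ht_def
    have ht : F.b i t ≠ 0 := tmax_mem (F.bfin i) hbi
    set k : Fin (F.b i t) := ⟨0, Nat.pos_of_ne_zero ht⟩
    set estar := coord (m := n + 1) (F.b i) t k with hestar
    set θ := (F.diff i).dualMap estar with hθ
    have hθne : θ ≠ 0 := by
      intro h0
      have hkermem : estar ∈ LinearMap.ker ((F.diff i).dualMap) := h0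
      cases i with
      | zero =>
        rw [hCM.1 (by omega)] at hkermem
        have : estar (bas (F.b 0) t k) = 0 := by rw [hkermem]; rfl
        rw [coord_bas_same] at this
        exact one_ne_zero this
      | succ i' =>
        rw [hCM.2 i' (by omega)] at hkermem
        obtain ⟨φ, hφ⟩ := hkermem
        have h1 : (1 : PolyS (n + 1)) ∈ mIdeal (n + 1) := by
          have := map_mem_mIdeal φ (F.minimal i' (bas (F.b (i' + 1)) t k))
          have heval : φ (F.diff i' (bas (F.b (i' + 1)) t k)) = 1 := by
            have := congrArg (fun ψ => ψ (bas (F.b (i' + 1)) t k)) hφ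
            simpa [LinearMap.dualMap_apply, hestar, coord_bas_same] using this
          rwa [heval] at this
        exact one_not_mem_mIdeal h1
    obtain ⟨j, l, hjl⟩ := exists_bas_ne_zero θ hθne
    have hbj : F.b (i + 1) j ≠ 0 := fun h => absurd l.isLt (by omega)
    set c : PolyS (n + 1) := (F.diff i (bas (F.b (i + 1)) j l)) t k with hc_def
    have hcne : c ≠ 0 := by
      intro h
      apply hjl
      rw [hθ, LinearMap.dualMap_apply, hestar]
      exact h
    have hc1 : c ∈ hpiece (n + 1) (j - t) :=
      F.graded_diff i j (bas (F.b (i + 1)) j l) (bas_mem_freePiece _ _ _) t k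
    have hc2 : c ∈ mIdeal (n + 1) :=
      map_mem_mIdeal (coord (F.b i) t k) (F.minimal i (bas (F.b (i + 1)) j l))
    have hjt : 0 ≤ j - t := by
      by_contra hlt
      rw [hpiece, if_neg hlt] at hc1
      exact hcne hc1
    have hjt' : j ≠ t := by
      intro hEq
      apply hcne
      rw [hpiece, if_pos hjt] at hc1
      refine eq_zero_of_deg0 ?_ (constantCoeff_eq_zero_of_mem_mIdeal hc2)
      rwa [hEq, sub_self, Int.toNat_zero] at hc1
    have hjgt : t < j := by omega
    calc tmax (F.b i) = t := rfl
      _ < j := hjgt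
      _ ≤ tmax (F.b (i + 1)) := le_tmax (F.bfin (i + 1)) hbj

end
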